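/- Let f : ℝ → ℝ be integrable with ∫_ℝ f = 0 and x ↦ |x| f(x) integrable. Then W_f ∈ L²(ℝ) and D₁(f) = −2π ∬_{ℝ×ℝ} |x − y| f(x) f(y) dx dy; i.e. the regularized Hartree energy coincides with the formal Hartree energy for neutral functions with finite first moment. -/

import Mathlib

open MeasureTheory Real

/-- The primitive `W_f(x) = ∫_{-∞}^x f(y) dy`. -/
noncomputable def W (f : ℝ → ℝ) (x : ℝ) : ℝ := ∫ y in Set.Iic x, f y

/-- The regularized one-dimensional Hartree energy `D₁(f) = 4π ∫ |W_f|²`. -/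
noncomputable def D1 (f : ℝ → ℝ) : ℝ := 4 * π * ∫ x, (W f x) ^ 2

namespace HartreeAux

noncomputable def e (x t : ℝ) : ℝ := if x ≤ t then 1 else 0

noncomputable def k (x t : ℝ) : ℝ := e x t - e 0 t

lemma sq_e_sub_of_le {x y : ℝ} (h : x ≤ y) (t : ℝ) :
    (e x t - e y t) ^ 2 = (Set.Ico x y).indicator 1 t := by
  simp only [e, Set.indicator_apply, Set.mem_Ico, Pi.one_apply]
  rcases lt_or_ge t x with h1 | h1
  · have h2 : t < y := lt_of_lt_of_le h1 h
    simp [not_le.2 h1, not_le.2 h2]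
  · rcases lt_or_ge t y with h2 | h2
    · simp [h1, h2, not_le.2 h2]
    · simp [h1, h2, not_lt.2 h2]

lemma sq_e_sub (x y t : ℝ) :
    (e x t - e y t) ^ 2 = (Set.Ico (min x y) (max x y)).indicator 1 t := by
  rcases le_total x y with h | h
  · rw [min_eq_left h, max_eq_right h, sq_e_sub_of_le h]
  · rw [min_eq_right h, max_eq_left h, ← sq_e_sub_of_le h t]
    ring

lemma integrable_indicator_Ico (a b : ℝ) :
    Integrable ((Set.Ico a b).indicator (1 : ℝ → ℝ)) := by
  rw [integrable_indicator_iff measurableSet_Ico]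
  exact integrableOn_const measure_Ico_lt_top.ne

lemma integral_indicator_Ico (a b : ℝ) (h : a ≤ b) :
    ∫ t, (Set.Ico a b).indicator (1 : ℝ → ℝ) t = b - a := by
  rw [integral_indicator measurableSet_Ico]
  simp [Real.volume_Ico, ENNReal.toReal_ofReal (by linarith : (0:ℝ) ≤ b - a), h]

lemma integrable_sq_e_sub (x y : ℝ) : Integrable (fun t => (e x t - e y t) ^ 2) := by
  simp only [sq_e_sub]
  exact integrable_indicator_Ico _ _

lemma integral_sq_e_sub (x y : ℝ) : ∫ t, (e x t - e y t) ^ 2 = |x - y| := by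
  simp only [sq_e_sub]
  rw [integral_indicator_Ico _ _ min_le_max, max_sub_min_eq_abs, abs_sub_comm]

lemma integral_k_mul (x y : ℝ) :
    ∫ t, k x t * k y t = (|x| + |y| - |x - y|) / 2 := by
  have hpt : ∀ t, k x t * k y t =
      ((e x t - e 0 t) ^ 2 + (e y t - e 0 t) ^ 2 - (e x t - e y t) ^ 2) / 2 := by
    intro t; simp only [k]; ring
  simp only [hpt]
  have h1 : Integrable (fun t => (e x t - e 0 t) ^ 2 + (e y t - e 0 t) ^ 2) := by
    exact (integrable_sq_e_sub x 0).add (integrable_sq_e_sub y 0)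
  rw [integral_div, integral_sub h1 (integrable_sq_e_sub x y),
    integral_add (integrable_sq_e_sub x 0) (integrable_sq_e_sub y 0),
    integral_sq_e_sub, integral_sq_e_sub, integral_sq_e_sub]
  simp

lemma abs_k (x t : ℝ) : |k x t| = (Set.Ico (min x 0) (max x 0)).indicator 1 t := by
  rw [← sq_e_sub x 0 t]
  have h : e x t - e 0 t = 1 ∨ e x t - e 0 t = 0 ∨ e x t - e 0 t = -1 := by
    simp only [e]; split_ifs <;> norm_num
  show |e x t - e 0 t| = _
  rcases h with h | h | h <;> rw [h] <;> norm_num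

lemma norm_k (x t : ℝ) : ‖k x t‖ = (Set.Ico (min x 0) (max x 0)).indicator 1 t :=
  abs_k x t

lemma norm_k_le_one (x t : ℝ) : ‖k x t‖ ≤ 1 := by
  rw [norm_k, Set.indicator_apply]
  split_ifs <;> norm_num

lemma measurable_k_right (x : ℝ) : Measurable (k x) := by
  unfold k e
  exact (Measurable.ite measurableSet_Ici measurable_const measurable_const).sub
    (Measurable.ite measurableSet_Ici measurable_const measurable_const)

lemma measurable_uncurry_k : Measurable (Function.uncurry k) := by
  unfold Function.uncurry k e
  exact (Measurable.ite (measurableSet_le measurable_fst measurable_snd) measurable_const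
      measurable_const).sub
    (Measurable.ite (measurableSet_le measurable_const measurable_snd) measurable_const
      measurable_const)

lemma integrable_norm_k (x : ℝ) : Integrable (fun t => ‖k x t‖) := by
  simp only [norm_k]
  exact integrable_indicator_Ico _ _

lemma integrable_k (x : ℝ) : Integrable (k x) :=
  (integrable_norm_iff (measurable_k_right x).aestronglyMeasurable).1 (integrable_norm_k x)

lemma integral_norm_k (x : ℝ) : ∫ t, ‖k x t‖ = |x| := by
  simp only [norm_k]
  rw [integral_indicator_Ico _ _ min_le_max, max_sub_min_eq_abs]
  simp [abs_sub_comm]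

lemma W_eq {f : ℝ → ℝ} (hf : Integrable f) (h0 : ∫ x, f x = 0) (t : ℝ) :
    W f t = ∫ x, f x * k x t := by
  have h1 : ∀ x, f x * k x t = Set.indicator (Set.Iic t) f x - e 0 t * f x := by
    intro x
    simp only [k, e, Set.indicator_apply, Set.mem_Iic]
    split_ifs <;> ring
  simp only [h1]
  rw [integral_sub (hf.indicator measurableSet_Iic) (hf.const_mul _),
    integral_indicator measurableSet_Iic, integral_const_mul, h0, mul_zero, sub_zero]
  rfl

lemma norm_W_le {f : ℝ → ℝ} (hf : Integrable f) (t : ℝ) :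
    ‖W f t‖ ≤ ∫ x, ‖f x‖ := by
  calc ‖W f t‖ ≤ ∫ x in Set.Iic t, ‖f x‖ := norm_integral_le_integral_norm _
  _ ≤ ∫ x, ‖f x‖ :=
      setIntegral_le_integral hf.norm (Filter.Eventually.of_forall fun x => norm_nonneg _)

lemma aesm_W {f : ℝ → ℝ} (hf : Integrable f) : AEStronglyMeasurable (W f) volume := by
  set g := hf.1.mk f with hg
  have hW : W f = fun t => ∫ x, Set.indicator (Set.Iic t) g x := by
    funext t
    calc W f t = ∫ x in Set.Iic t, g x :=
          integral_congr_ae (ae_restrict_of_ae hf.1.ae_eq_mk)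
    _ = ∫ x, Set.indicator (Set.Iic t) g x := (integral_indicator measurableSet_Iic).symm
  rw [hW]
  have hsm : StronglyMeasurable (Function.uncurry fun t x => Set.indicator (Set.Iic t) g x) := by
    have heq : (Function.uncurry fun t x => Set.indicator (Set.Iic t) g x)
        = Set.indicator {q : ℝ × ℝ | q.2 ≤ q.1} (fun q => g q.2) := by
      funext p
      simp [Function.uncurry, Set.indicator_apply, Set.mem_Iic, Set.mem_setOf_eq]
    rw [heq]
    exact ((hf.1.stronglyMeasurable_mk.measurable.comp measurable_snd).indicator
      (measurableSet_le measurable_snd measurable_fst)).stronglyMeasurable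
  exact hsm.integral_prod_right'.aestronglyMeasurable

/-- Inner Fubini step: for fixed `x`, `∫ t, k x t * W f t = ∫ y, f y * ((|x|+|y|-|x-y|)/2)`. -/
lemma integral_k_mul_W {f : ℝ → ℝ} (hf : Integrable f) (h0 : ∫ x, f x = 0) (x : ℝ) :
    ∫ t, k x t * W f t = ∫ y, f y * ((|x| + |y| - |x - y|) / 2) := by
  have hint : Integrable (Function.uncurry fun t y => k x t * (f y * k y t))
      (volume.prod volume) := by
    apply Integrable.mono' ((integrable_norm_k x).mul_prod hf.norm)
    · exact (((measurable_k_right x).comp measurable_fst).aestronglyMeasurable).mul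
        (hf.1.comp_snd.mul
          ((measurable_uncurry_k.comp (measurable_snd.prodMk measurable_fst)).aestronglyMeasurable))
    · apply Filter.Eventually.of_forall
      rintro ⟨t, y⟩
      simp only [Function.uncurry_apply_pair, norm_mul]
      calc ‖k x t‖ * (‖f y‖ * ‖k y t‖) = (‖k x t‖ * ‖f y‖) * ‖k y t‖ := by ring
      _ ≤ ‖k x t‖ * ‖f y‖ := mul_le_of_le_one_right (by positivity) (norm_k_le_one y t)
  calc ∫ t, k x t * W f t = ∫ t, ∫ y, k x t * (f y * k y t) := by
        congr 1; funext t
        rw [W_eq hf h0 t, ← integral_const_mul]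
  _ = ∫ y, ∫ t, k x t * (f y * k y t) := integral_integral_swap hint
  _ = ∫ y, f y * ((|x| + |y| - |x - y|) / 2) := by
        congr 1; funext y
        have hpt : ∀ t, k x t * (f y * k y t) = f y * (k x t * k y t) := fun t => by ring
        simp only [hpt]
        rw [integral_const_mul, integral_k_mul]

/-- Integrability for the outer Fubini step. -/
lemma integrable_prod_fkW {f : ℝ → ℝ} (hf : Integrable f)
    (hm'' : Integrable fun y => ‖f y‖ * |y|) :
    Integrable (Function.uncurry fun t y => (f y * k y t) * W f t) (volume.prod volume) := by
  set A := ∫ x, ‖f x‖ with hA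
  have hq : Integrable (fun p : ℝ × ℝ => (‖f p.2‖ * ‖k p.2 p.1‖) * A) (volume.prod volume) := by
    apply Integrable.mul_const
    refine (integrable_prod_iff' ?_).2 ⟨?_, ?_⟩
    · exact (hf.1.norm.comp_snd).mul
        ((measurable_uncurry_k.comp (measurable_snd.prodMk measurable_fst)).norm.aestronglyMeasurable)
    · exact Filter.Eventually.of_forall fun y => by
        simpa using (integrable_norm_k y).const_mul ‖f y‖
    · have heq : (fun y => ∫ t, ‖‖f y‖ * ‖k y t‖‖) = fun y => ‖f y‖ * |y| := by
        funext y
        simp only [norm_mul, norm_norm]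
        rw [integral_const_mul, integral_norm_k]
      rw [heq]
      exact hm''
  apply Integrable.mono' hq
  · exact ((hf.1.comp_snd.mul
      ((measurable_uncurry_k.comp (measurable_snd.prodMk measurable_fst)).aestronglyMeasurable)).mul
      ((aesm_W hf).comp_fst))
  · apply Filter.Eventually.of_forall
    rintro ⟨t, y⟩
    simp only [Function.uncurry_apply_pair, norm_mul]
    calc ‖f y‖ * ‖k y t‖ * ‖W f t‖ ≤ ‖f y‖ * ‖k y t‖ * A :=
          mul_le_mul_of_nonneg_left (norm_W_le hf t) (by positivity)
    _ = (‖f y‖ * ‖k y t‖) * A := by ring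

lemma integrable_W_sq {f : ℝ → ℝ} (hf : Integrable f) (h0 : ∫ x, f x = 0)
    (hm'' : Integrable fun y => ‖f y‖ * |y|) :
    Integrable (fun t => (W f t) ^ 2) := by
  have h := (integrable_prod_fkW hf hm'').integral_prod_left
  apply h.congr
  apply Filter.Eventually.of_forall
  intro t
  simp only [Function.uncurry_apply_pair]
  rw [integral_mul_const, ← W_eq hf h0 t, sq]

lemma integral_W_sq {f : ℝ → ℝ} (hf : Integrable f) (h0 : ∫ x, f x = 0)
    (hm'' : Integrable fun y => ‖f y‖ * |y|) :
    ∫ t, (W f t) ^ 2 = ∫ x, f x * ∫ y, f y * ((|x| + |y| - |x - y|) / 2) := by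
  calc ∫ t, (W f t) ^ 2 = ∫ t, ∫ y, (f y * k y t) * W f t := by
        congr 1; funext t
        rw [integral_mul_const, ← W_eq hf h0 t, sq]
  _ = ∫ y, ∫ t, (f y * k y t) * W f t :=
        integral_integral_swap (integrable_prod_fkW hf hm'')
  _ = ∫ x, f x * ∫ t, k x t * W f t := by
        congr 1; funext y
        have hpt : ∀ t, (f y * k y t) * W f t = f y * (k y t * W f t) := fun t => by ring
        simp only [hpt]
        rw [integral_const_mul]
  _ = ∫ x, f x * ∫ y, f y * ((|x| + |y| - |x - y|) / 2) := by
        congr 1; funext x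
        rw [integral_k_mul_W hf h0 x]

end HartreeAux

open HartreeAux

/-- For a neutral integrable `f` with finite first moment, `W_f ∈ L²` and the regularized
Hartree energy coincides with the formal one `-2π ∬ |x-y| f(x) f(y)`. -/
theorem stmt2 (f : ℝ → ℝ) (hf : Integrable f) (h0 : ∫ x, f x = 0)
    (hm : Integrable (fun x => |x| * f x)) :
    MemLp (W f) 2 volume ∧
    D1 f = -2 * π * ∫ x, ∫ y, |x - y| * f x * f y := by
  have hm' : Integrable (fun y => f y * |y|) :=
    hm.congr (Filter.Eventually.of_forall fun y => mul_comm _ _)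
  have hm'' : Integrable (fun y => ‖f y‖ * |y|) := by
    apply hm.norm.congr
    apply Filter.Eventually.of_forall
    intro y
    simp [Real.norm_eq_abs, abs_mul, abs_abs, mul_comm]
  set M := ∫ y, f y * |y| with hM
  set A := ∫ x, ‖f x‖ with hA
  set B := ∫ y, ‖f y‖ * |y| with hB
  have hpw : ∀ x y : ℝ, ‖f y * |x - y|‖ ≤ ‖f y‖ * |x| + ‖f y‖ * |y| := by
    intro x y
    rw [norm_mul]
    calc ‖f y‖ * ‖|x - y|‖ = ‖f y‖ * |x - y| := by simp [Real.norm_eq_abs, abs_abs]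
    _ ≤ ‖f y‖ * (|x| + |y|) := by
        apply mul_le_mul_of_nonneg_left _ (norm_nonneg _)
        exact norm_sub_le x y
    _ = ‖f y‖ * |x| + ‖f y‖ * |y| := by ring
  have i3 : ∀ x : ℝ, Integrable (fun y => f y * |x - y|) := by
    intro x
    apply Integrable.mono' ((hf.norm.mul_const |x|).add hm'')
    · exact hf.1.mul ((continuous_const.sub continuous_id).abs.aestronglyMeasurable)
    · exact Filter.Eventually.of_forall fun y => hpw x y
  have hsplit : ∀ x : ℝ, ∫ y, f y * ((|x| + |y| - |x - y|) / 2)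
      = (M - ∫ y, f y * |x - y|) / 2 := by
    intro x
    have hpt : ∀ y, f y * ((|x| + |y| - |x - y|) / 2)
        = (f y * |x| + f y * |y| - f y * |x - y|) / 2 := fun y => by ring
    simp only [hpt]
    have h1 : Integrable (fun y => f y * |x| + f y * |y|) := by
      exact (hf.mul_const _).add hm'
    rw [integral_div, integral_sub h1 (i3 x), integral_add (hf.mul_const _) hm',
      integral_mul_const, h0, zero_mul, zero_add]
  have hI_aesm : AEStronglyMeasurable (fun x => ∫ y, f y * |x - y|) volume := by
    have hprod_aesm : AEStronglyMeasurable (fun p : ℝ × ℝ => f p.2 * |p.1 - p.2|)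
        (volume.prod volume) :=
      hf.1.comp_snd.mul ((continuous_fst.sub continuous_snd).abs.aestronglyMeasurable)
    exact hprod_aesm.integral_prod_right'
  have ibound : Integrable (fun x => ‖f x‖ * (|x| * A + B)) := by
    have h1 : Integrable (fun x => (‖f x‖ * |x|) * A + ‖f x‖ * B) := by
      exact (hm''.mul_const A).add (hf.norm.mul_const B)
    exact h1.congr (Filter.Eventually.of_forall fun x => by ring)
  have iS : Integrable (fun x => f x * ∫ y, f y * |x - y|) := by
    apply Integrable.mono' ibound (hf.1.mul hI_aesm)
    apply Filter.Eventually.of_forall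
    intro x
    simp only [Pi.mul_apply]
    rw [norm_mul]
    have h2 : ‖∫ y, f y * |x - y|‖ ≤ |x| * A + B := by
      calc ‖∫ y, f y * |x - y|‖ ≤ ∫ y, ‖f y * |x - y|‖ := norm_integral_le_integral_norm _
      _ ≤ ∫ y, (‖f y‖ * |x| + ‖f y‖ * |y|) := by
          apply integral_mono (i3 x).norm ((hf.norm.mul_const _).add hm'')
          exact fun y => hpw x y
      _ = |x| * A + B := by
          rw [integral_add (hf.norm.mul_const _) hm'', integral_mul_const]
          ring
    exact mul_le_mul_of_nonneg_left h2 (norm_nonneg _)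
  have key : ∫ t, (W f t) ^ 2 = -(∫ x, f x * ∫ y, f y * |x - y|) / 2 := by
    rw [integral_W_sq hf h0 hm'']
    have hpt : ∀ x, f x * ∫ y, f y * ((|x| + |y| - |x - y|) / 2)
        = (f x * M - f x * ∫ y, f y * |x - y|) / 2 := by
      intro x; rw [hsplit x]; ring
    simp only [hpt]
    rw [integral_div, integral_sub (hf.mul_const M) iS, integral_mul_const, h0, zero_mul]
    ring
  have hRHS : ∫ x, ∫ y, |x - y| * f x * f y = ∫ x, f x * ∫ y, f y * |x - y| := by
    congr 1; funext x
    have hpt : ∀ y, |x - y| * f x * f y = f x * (f y * |x - y|) := fun y => by ring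
    simp only [hpt]
    rw [integral_const_mul]
  refine ⟨(memLp_two_iff_integrable_sq (aesm_W hf)).2 (integrable_W_sq hf h0 hm''), ?_⟩
  rw [D1, key, hRHS]
  ring
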